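/- If s : (0,∞) → (0,∞) is a self-inverse (s ∘ s = id), surjective, strictly decreasing differentiable function, then for any integrable f, ∫₀^∞ f((x − s(x))²) dx = ∫₀^∞ f(y²) dy. -/

import Mathlib

open MeasureTheory Real Set

/-- Generalized Cauchy–Schlömilch transformation with a self-inverse function `s`. -/
theorem gen_cauchy_schlomilch (s : ℝ → ℝ)
    (hs_pos : ∀ x ∈ Ioi (0:ℝ), s x ∈ Ioi (0:ℝ))
    (hs_inv : ∀ x ∈ Ioi (0:ℝ), s (s x) = x)
    (hs_surj : Ioi (0:ℝ) ⊆ s '' Ioi (0:ℝ))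
    (hs_anti : StrictAntiOn s (Ioi (0:ℝ)))
    (hs_diff : ∀ x ∈ Ioi (0:ℝ), DifferentiableAt ℝ s x)
    (f : ℝ → ℝ) (hf_meas : Measurable f)
    (hf_int : IntegrableOn (fun y => f (y ^ 2)) (Ioi 0)) :
    ∫ x in Ioi (0 : ℝ), f ((x - s x) ^ 2) = ∫ y in Ioi (0 : ℝ), f (y ^ 2) := by
  set g : ℝ → ℝ := fun x => x - s x with hg_def
  have hs_inj : InjOn s (Ioi 0) := hs_anti.injOn
  have hg_mono : StrictMonoOn g (Ioi 0) := by
    intro a ha b hb hab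
    have := hs_anti ha hb hab
    simp only [hg_def]
    linarith
  have hg_inj : InjOn g (Ioi 0) := hg_mono.injOn
  have hs_img : s '' Ioi 0 = Ioi 0 :=
    Subset.antisymm (image_subset_iff.2 hs_pos) hs_surj
  -- derivative of s is nonpositive on Ioi 0
  have h_d_le : ∀ x ∈ Ioi (0:ℝ), deriv s x ≤ 0 := by
    intro x hx
    have hd : HasDerivAt s (deriv s x) x := (hs_diff x hx).hasDerivAt
    have htend : Filter.Tendsto (slope s x) (nhdsWithin x {x}ᶜ) (nhds (deriv s x)) :=
      hasDerivAt_iff_tendsto_slope.mp hd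
    have h2 : Filter.Tendsto (slope s x) (nhdsWithin x (Ioi x)) (nhds (deriv s x)) :=
      htend.mono_left (nhdsWithin_mono x (fun y hy => ne_of_gt hy))
    refine le_of_tendsto h2 ?_
    filter_upwards [self_mem_nhdsWithin] with y hy
    have hy0 : y ∈ Ioi (0:ℝ) := mem_Ioi.mpr (lt_trans (mem_Ioi.mp hx) (mem_Ioi.mp hy))
    have hlt := hs_anti hx hy0 hy
    rw [slope_def_field]
    apply div_nonpos_of_nonpos_of_nonneg <;> simp only [mem_Ioi] at hy ⊢ <;> linarith
  -- continuity of g on Ioi 0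
  have hcg : ContinuousOn g (Ioi 0) := fun x hx =>
    ((differentiableAt_id.sub (hs_diff x hx)).continuousAt).continuousWithinAt
  -- g maps Ioi 0 onto ℝ
  have hg_img : g '' Ioi 0 = univ := by
    apply eq_univ_of_forall
    intro u
    set T : ℝ := max 2 (s 1 - u) with hT
    have hT1 : (1:ℝ) < T := lt_of_lt_of_le one_lt_two (le_max_left _ _)
    have hT0 : T ∈ Ioi (0:ℝ) := lt_trans one_pos hT1
    have h1 : (1:ℝ) ∈ Ioi (0:ℝ) := mem_Ioi.mpr one_pos
    have ha0 : s T ∈ Ioi (0:ℝ) := hs_pos T hT0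
    have hsT : s T < s 1 := hs_anti h1 hT0 hT1
    have hga : g (s T) ≤ u := by
      have : s (s T) = T := hs_inv T hT0
      simp only [hg_def, this]
      have : s 1 - u ≤ T := le_max_right _ _
      linarith
    set b : ℝ := max 2 (u + s 1) with hb
    have hb1 : (1:ℝ) < b := lt_of_lt_of_le one_lt_two (le_max_left _ _)
    have hb0 : b ∈ Ioi (0:ℝ) := lt_trans one_pos hb1
    have hsb : s b < s 1 := hs_anti h1 hb0 hb1
    have hgb : u ≤ g b := by
      have : u + s 1 ≤ b := le_max_right _ _
      simp only [hg_def]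
      linarith
    have := (isPreconnected_Ioi (a := (0:ℝ))).intermediate_value ha0 hb0 hcg
    exact this ⟨hga, hgb⟩
  -- integrability of u ↦ f (u^2) on all of ℝ
  have hInt_univ : Integrable (fun u : ℝ => f (u ^ 2)) := by
    have hIic : IntegrableOn (fun u : ℝ => f (u ^ 2)) (Iic 0) := by
      rw [IntegrableOn, ← Measure.map_neg_eq_self (volume : Measure ℝ)]
      have m : MeasurableEmbedding fun x : ℝ => -x := (Homeomorph.neg ℝ).measurableEmbedding
      rw [Measure.restrict_map m.measurable measurableSet_Iic, m.integrable_map_iff]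
      have h1 : ((fun u : ℝ => f (u ^ 2)) ∘ fun x : ℝ => -x) = fun u : ℝ => f (u ^ 2) := by
        funext x; simp [Function.comp, neg_sq]
      have h2 : (fun x : ℝ => -x) ⁻¹' Iic 0 = Ici 0 := by
        ext x; simp
      rw [h1, h2]
      exact Iff.mpr integrableOn_Ici_iff_integrableOn_Ioi hf_int
    have hunion := hIic.union hf_int
    rwa [Iic_union_Ioi, integrableOn_univ] at hunion
  -- change of variables with g
  have hg_deriv : ∀ x ∈ Ioi (0:ℝ), HasDerivWithinAt g (1 - deriv s x) (Ioi 0) x := fun x hx =>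
    ((hasDerivAt_id x).sub (hs_diff x hx).hasDerivAt).hasDerivWithinAt
  have hC := integral_image_eq_integral_abs_deriv_smul measurableSet_Ioi hg_deriv hg_inj
    (fun u => f (u ^ 2))
  rw [hg_img, Measure.restrict_univ] at hC
  simp only [hg_def] at hC
  -- LHS of hC equals 2 * target
  have habs : ∫ u : ℝ, f (u ^ 2) = 2 * ∫ y in Ioi (0:ℝ), f (y ^ 2) := by
    have := integral_comp_abs (f := fun y => f (y ^ 2))
    simp only [sq_abs] at this
    exact this
  -- integrability of the transformed integrand
  have hInt2 := (integrableOn_image_iff_integrableOn_abs_deriv_smul measurableSet_Ioi hg_deriv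
    hg_inj (fun u => f (u ^ 2))).mp (by rw [hg_img]; exact hInt_univ.integrableOn)
  simp only [hg_def] at hInt2
  -- measurability pieces
  have hs_ae : AEMeasurable s (volume.restrict (Ioi 0)) := by
    have hcs : ContinuousOn s (Ioi 0) := fun x hx => (hs_diff x hx).continuousAt.continuousWithinAt
    exact hcs.aemeasurable measurableSet_Ioi
  have hgm : AEMeasurable (fun x => f ((x - s x) ^ 2)) (volume.restrict (Ioi 0)) := by
    exact hf_meas.comp_aemeasurable ((aemeasurable_id.sub hs_ae).pow_const 2)
  have hdm : AEMeasurable (fun x => |deriv s x| * f ((x - s x) ^ 2)) (volume.restrict (Ioi 0)) :=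
    ((measurable_deriv s).abs.aemeasurable).mul hgm
  -- pointwise facts on Ioi 0
  have hae_mem := ae_restrict_mem (μ := volume) measurableSet_Ioi (s := Ioi (0:ℝ))
  have h1int : IntegrableOn (fun x => f ((x - s x) ^ 2)) (Ioi 0) := by
    refine Integrable.mono hInt2 hgm.aestronglyMeasurable ?_
    filter_upwards [hae_mem] with x hx
    have hd := h_d_le x hx
    have h1 : (1:ℝ) ≤ |1 - deriv s x| := by rw [abs_of_nonneg (by linarith)]; linarith
    simp only [smul_eq_mul, norm_mul, Real.norm_eq_abs, abs_abs]
    nlinarith [abs_nonneg (f ((x - s x) ^ 2)), abs_nonneg (1 - deriv s x)]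
  have h2int : IntegrableOn (fun x => |deriv s x| * f ((x - s x) ^ 2)) (Ioi 0) := by
    refine Integrable.mono hInt2 hdm.aestronglyMeasurable ?_
    filter_upwards [hae_mem] with x hx
    have hd := h_d_le x hx
    simp only [smul_eq_mul, norm_mul, Real.norm_eq_abs, abs_abs]
    have : |deriv s x| ≤ |1 - deriv s x| := by
      rw [abs_of_nonneg (by linarith : (0:ℝ) ≤ 1 - deriv s x), abs_of_nonpos hd]; linarith
    nlinarith [abs_nonneg (f ((x - s x) ^ 2))]
  -- split hC into two integrals
  have hsplit : (∫ x in Ioi (0:ℝ), |1 - deriv s x| • f ((x - s x) ^ 2))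
      = (∫ x in Ioi (0:ℝ), f ((x - s x) ^ 2))
        + ∫ x in Ioi (0:ℝ), |deriv s x| * f ((x - s x) ^ 2) := by
    rw [← integral_add h1int h2int]
    refine setIntegral_congr_fun measurableSet_Ioi (fun x hx => ?_)
    have hd := h_d_le x hx
    rw [smul_eq_mul, abs_of_nonneg (by linarith : (0:ℝ) ≤ 1 - deriv s x), abs_of_nonpos hd]
    ring
  -- change of variables with s : second integral equals the first
  have hs_deriv : ∀ x ∈ Ioi (0:ℝ), HasDerivWithinAt s (deriv s x) (Ioi 0) x := fun x hx =>
    (hs_diff x hx).hasDerivAt.hasDerivWithinAt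
  have hA := integral_image_eq_integral_abs_deriv_smul measurableSet_Ioi hs_deriv hs_inj
    (fun x => f ((x - s x) ^ 2))
  rw [hs_img] at hA
  have hA' : (∫ x in Ioi (0:ℝ), |deriv s x| • f ((s x - s (s x)) ^ 2))
      = ∫ x in Ioi (0:ℝ), |deriv s x| * f ((x - s x) ^ 2) := by
    refine setIntegral_congr_fun measurableSet_Ioi (fun t ht => ?_)
    rw [hs_inv t ht, smul_eq_mul]
    congr 2
    ring
  rw [hA'] at hA
  -- conclude
  have key : 2 * ∫ y in Ioi (0:ℝ), f (y ^ 2) = 2 * ∫ x in Ioi (0:ℝ), f ((x - s x) ^ 2) := by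
    rw [← habs, hC, hsplit, ← hA]
    ring
  linarith
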